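/- For every nonzero totally positive element a ∈ 𝒪, let g_a = (a, 0) ∈ P_K⁺ and Γ = P_𝒪⁺. Then the double coset Γ g_a Γ equals the single right coset Γ g_a (so |{Γh : h ∈ Γg_aΓ}| = 1), and the number of left cosets of Γ contained in Γ g_a Γ, i.e. |{hΓ : h ∈ Γg_aΓ}|, equals the absolute norm N_a = |𝒪/a𝒪| of the ideal a𝒪. -/

import Mathlib

/-- An element of a number field is *totally positive* if it is positive in every
real embedding. -/
def TotallyPositive (K : Type*) [Field K] (x : K) : Prop :=
  ∀ φ : K →+* ℝ, 0 < φ x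

/-- The `ax + b` group of a field `K`: pairs `(a, b)` with `a ∈ Kˣ`, `b ∈ K`, acting as
`t ↦ a * t + b`, with composition as group law. -/
@[ext]
structure AffPair (K : Type*) [Field K] where
  a : Kˣ
  b : K

namespace AffPair

variable {K : Type*} [Field K]

instance : Mul (AffPair K) := ⟨fun p q => ⟨p.a * q.a, p.b + (p.a : K) * q.b⟩⟩
instance : One (AffPair K) := ⟨⟨1, 0⟩⟩
instance : Inv (AffPair K) := ⟨fun p => ⟨p.a⁻¹, -(((p.a⁻¹ : Kˣ) : K) * p.b)⟩⟩

@[simp] lemma mul_a (p q : AffPair K) : (p * q).a = p.a * q.a := rfl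
@[simp] lemma mul_b (p q : AffPair K) : (p * q).b = p.b + (p.a : K) * q.b := rfl
@[simp] lemma one_a : (1 : AffPair K).a = 1 := rfl
@[simp] lemma one_b : (1 : AffPair K).b = 0 := rfl
@[simp] lemma inv_a (p : AffPair K) : (p⁻¹).a = p.a⁻¹ := rfl
@[simp] lemma inv_b (p : AffPair K) : (p⁻¹).b = -(((p.a⁻¹ : Kˣ) : K) * p.b) := rfl

instance : Group (AffPair K) where
  mul_assoc p q r := by
    ext
    · simp [mul_assoc]
    · simp [mul_add, mul_assoc, add_assoc]
  one_mul p := by ext <;> simp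
  mul_one p := by ext <;> simp
  inv_mul_cancel p := by
    ext
    · simp
    · simp

end AffPair

/-- The subgroup `P_𝒪⁺ ⊆ P_K⁺` of affine transformations whose linear coefficient is a
totally positive unit of the ring of integers and whose translation part is an algebraic
integer, viewed as a subset of the affine group. -/
def GammaSet (K : Type*) [Field K] : Set (AffPair K) :=
  {p | TotallyPositive K (p.a : K) ∧ IsIntegral ℤ ((p.a : K)) ∧
    IsIntegral ℤ (((p.a⁻¹ : Kˣ) : K)) ∧ IsIntegral ℤ p.b}

/-- The double coset `Γ g Γ` where `Γ = P_𝒪⁺`. -/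
def doubleCoset (K : Type*) [Field K] (g : AffPair K) : Set (AffPair K) :=
  {h | ∃ γ₁ ∈ GammaSet K, ∃ γ₂ ∈ GammaSet K, h = γ₁ * g * γ₂}

/-- The collection of left cosets `hΓ` with `h ∈ ΓgΓ`. -/
def leftCosetsIn (K : Type*) [Field K] (g : AffPair K) : Set (Set (AffPair K)) :=
  {C | ∃ h ∈ doubleCoset K g, C = (fun γ => h * γ) '' GammaSet K}

/-- The collection of right cosets `Γh` with `h ∈ ΓgΓ`. -/
def rightCosetsIn (K : Type*) [Field K] (g : AffPair K) : Set (Set (AffPair K)) :=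
  {C | ∃ h ∈ doubleCoset K g, C = (fun γ => γ * h) '' GammaSet K}


section Aux

variable {K : Type*} [Field K]

lemma one_mem_Gamma : (1 : AffPair K) ∈ GammaSet K := by
  refine ⟨fun φ => by simp, by simpa using isIntegral_one, by simpa using isIntegral_one,
    by simpa using isIntegral_zero⟩

lemma mul_mem_Gamma {p q : AffPair K} (hp : p ∈ GammaSet K) (hq : q ∈ GammaSet K) :
    p * q ∈ GammaSet K := by
  obtain ⟨hp1, hp2, hp3, hp4⟩ := hp
  obtain ⟨hq1, hq2, hq3, hq4⟩ := hq
  refine ⟨fun φ => ?_, ?_, ?_, ?_⟩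
  · rw [AffPair.mul_a, Units.val_mul, map_mul]
    exact mul_pos (hp1 φ) (hq1 φ)
  · rw [AffPair.mul_a, Units.val_mul]; exact hp2.mul hq2
  · rw [AffPair.mul_a, mul_inv, Units.val_mul]; exact hp3.mul hq3
  · rw [AffPair.mul_b]; exact hp4.add (hp2.mul hq4)

lemma inv_mem_Gamma {p : AffPair K} (hp : p ∈ GammaSet K) : p⁻¹ ∈ GammaSet K := by
  obtain ⟨hp1, hp2, hp3, hp4⟩ := hp
  refine ⟨fun φ => ?_, ?_, ?_, ?_⟩
  · rw [AffPair.inv_a, Units.val_inv_eq_inv_val, map_inv₀]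
    exact inv_pos.mpr (hp1 φ)
  · rw [AffPair.inv_a]; exact hp3
  · rw [AffPair.inv_a, inv_inv]; exact hp2
  · rw [AffPair.inv_b]; exact (hp3.mul hp4).neg

lemma coset_eq_iff (h h' : AffPair K) :
    ((fun γ => h * γ) '' GammaSet K = (fun γ => h' * γ) '' GammaSet K) ↔
      h⁻¹ * h' ∈ GammaSet K := by
  constructor
  · intro heq
    have : h' ∈ (fun γ => h' * γ) '' GammaSet K := ⟨1, one_mem_Gamma, mul_one h'⟩
    rw [← heq] at this
    obtain ⟨γ, hγ, hγ'⟩ := this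
    have : h⁻¹ * h' = γ := by rw [← hγ']; group
    rwa [this]
  · intro hm
    ext x
    constructor
    · rintro ⟨γ, hγ, rfl⟩
      exact ⟨(h⁻¹ * h')⁻¹ * γ, mul_mem_Gamma (inv_mem_Gamma hm) hγ, by group⟩
    · rintro ⟨γ, hγ, rfl⟩
      exact ⟨(h⁻¹ * h') * γ, mul_mem_Gamma hm hγ, by group⟩

end Aux

/-- For a nonzero totally positive algebraic integer `a`, with
`g_a = (a, 0) ∈ P_K⁺` and `Γ = P_𝒪⁺`: the double coset `Γ g_a Γ` is the single right coset
`Γ g_a`, so there is exactly one right coset of `Γ` in it, and the number of left cosets of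
`Γ` contained in `Γ g_a Γ` equals the absolute norm `N_a = |𝒪/a𝒪|`. -/
theorem doubleCoset_of_integer (K : Type*) [Field K] [NumberField K]
    (a : K) (ha0 : a ≠ 0) (haP : TotallyPositive K a) (haI : IsIntegral ℤ a) :
    doubleCoset K (⟨Units.mk0 a ha0, 0⟩ : AffPair K) =
        (fun γ => γ * (⟨Units.mk0 a ha0, 0⟩ : AffPair K)) '' GammaSet K ∧
      Nat.card ↥(rightCosetsIn K (⟨Units.mk0 a ha0, 0⟩ : AffPair K)) = 1 ∧
      Nat.card ↥(leftCosetsIn K (⟨Units.mk0 a ha0, 0⟩ : AffPair K)) =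
        Nat.card (NumberField.RingOfIntegers K ⧸
          Ideal.span {(⟨a, haI⟩ : NumberField.RingOfIntegers K)}) := by
  set g : AffPair K := ⟨Units.mk0 a ha0, 0⟩ with hg
  -- Part 1
  have part1 : doubleCoset K g = (fun γ => γ * g) '' GammaSet K := by
    ext h
    constructor
    · rintro ⟨γ₁, hγ₁, γ₂, hγ₂, rfl⟩
      obtain ⟨h11, h12, h13, h14⟩ := hγ₁
      obtain ⟨h21, h22, h23, h24⟩ := hγ₂
      refine ⟨⟨γ₁.a * γ₂.a, γ₁.b + (γ₁.a : K) * a * γ₂.b⟩, ?_, ?_⟩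
      · refine ⟨fun φ => ?_, ?_, ?_, ?_⟩
        · simpa [map_mul] using mul_pos (h11 φ) (h21 φ)
        · simpa using h12.mul h22
        · simpa [mul_inv] using h23.mul h13
        · exact h14.add ((h12.mul haI).mul h24)
      · ext
        · simp [hg]; ring
        · simp [hg]
    · rintro ⟨γ, hγ, rfl⟩
      exact ⟨γ, hγ, 1, one_mem_Gamma, (mul_one _).symm⟩
  refine ⟨part1, ?_, ?_⟩
  · -- Part 2 : rightCosetsIn is a singleton
    have hsingle : rightCosetsIn K g = {(fun γ => γ * g) '' GammaSet K} := by
      ext C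
      constructor
      · rintro ⟨h, hh, rfl⟩
        rw [part1] at hh
        obtain ⟨γ₀, hγ₀, rfl⟩ := hh
        have : (fun γ => γ * (γ₀ * g)) '' GammaSet K = (fun γ => γ * g) '' GammaSet K := by
          ext x
          constructor
          · rintro ⟨γ, hγ, rfl⟩
            exact ⟨γ * γ₀, mul_mem_Gamma hγ hγ₀, by group⟩
          · rintro ⟨γ, hγ, rfl⟩
            exact ⟨γ * γ₀⁻¹, mul_mem_Gamma hγ (inv_mem_Gamma hγ₀), by group⟩
        simpa using this
      · rintro rfl
        exact ⟨g, ⟨1, one_mem_Gamma, 1, one_mem_Gamma, by group⟩, rfl⟩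
    rw [hsingle]
    simp
  · -- Part 3
    set O := NumberField.RingOfIntegers K
    set I : Ideal O := Ideal.span {(⟨a, haI⟩ : O)} with hI
    set Cb : O → Set (AffPair K) :=
      fun b => (fun γ => (⟨Units.mk0 a ha0, (b : K)⟩ : AffPair K) * γ) '' GammaSet K with hCb
    -- membership of the translated element in Γ iff criterion
    have hone : ∀ x : K, (⟨1, x⟩ : AffPair K) ∈ GammaSet K ↔ IsIntegral ℤ x := by
      intro x
      constructor
      · rintro ⟨-, -, -, h⟩; exact h
      · intro h
        exact ⟨fun φ => by simp, by simpa using isIntegral_one, by simpa using isIntegral_one, h⟩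
    have hkey : ∀ b b' : O, Cb b = Cb b' ↔
        Ideal.Quotient.mk I b = Ideal.Quotient.mk I b' := by
      intro b b'
      rw [hCb, coset_eq_iff]
      have hinv : (⟨Units.mk0 a ha0, (b : K)⟩ : AffPair K)⁻¹ *
          (⟨Units.mk0 a ha0, (b' : K)⟩ : AffPair K) = ⟨1, a⁻¹ * ((b' : K) - (b : K))⟩ := by
        ext
        · simp
        · simp [mul_sub]
          ring
      have hmem_iff : b' - b ∈ I ↔ ∃ c : O, b' - b = (show O from ⟨a, haI⟩) * c := by
        rw [hI]; exact Ideal.mem_span_singleton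
      rw [hinv, hone, eq_comm, Ideal.Quotient.eq, hmem_iff]
      constructor
      · intro h
        refine ⟨⟨a⁻¹ * ((b' : K) - (b : K)), h⟩, ?_⟩
        ext
        push_cast
        field_simp
        exact (by field_simp : ((b' : K) - b) = a * (((b' : K) - b) / a))
      · rintro ⟨c, hc⟩
        have hc' : (b' : K) - (b : K) = a * (c : K) := by
          have h2 := congrArg (fun x : O => (x : K)) hc
          exact h2
        have : a⁻¹ * ((b' : K) - (b : K)) = (c : K) := by
          rw [hc']; field_simp
        rw [this]
        exact c.isIntegral_coe
    have hmem : ∀ b : O, Cb b ∈ leftCosetsIn K g := by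
      intro b
      refine ⟨⟨Units.mk0 a ha0, (b : K)⟩, ⟨⟨1, (b : K)⟩, (hone _).mpr b.isIntegral_coe,
        1, one_mem_Gamma, ?_⟩, rfl⟩
      ext
      · simp [hg]
      · simp [hg]
    -- every left coset is some Cb
    have hsurj : ∀ C ∈ leftCosetsIn K g, ∃ b : O, C = Cb b := by
      rintro C ⟨h, hh, rfl⟩
      rw [part1] at hh
      obtain ⟨γ₀, hγ₀, rfl⟩ := hh
      obtain ⟨h1, h2, h3, h4⟩ := hγ₀
      refine ⟨⟨γ₀.b, h4⟩, ?_⟩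
      rw [hCb]
      rw [coset_eq_iff]
      have : (γ₀ * g)⁻¹ * (⟨Units.mk0 a ha0, ((⟨γ₀.b, h4⟩ : O) : K)⟩ : AffPair K) =
          ⟨γ₀.a⁻¹, 0⟩ := by
        have hb : ((⟨γ₀.b, h4⟩ : O) : K) = γ₀.b := rfl
        ext
        · simp [hg, mul_inv]
        · simp [hg, hb, mul_inv]
          ring
      refine Set.mem_of_eq_of_mem this ?_
      refine ⟨fun φ => ?_, ?_, ?_, ?_⟩
      · show 0 < φ ((γ₀.a⁻¹ : Kˣ) : K)
        rw [Units.val_inv_eq_inv_val, map_inv₀]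
        exact inv_pos.mpr (h1 φ)
      · exact h3
      · show IsIntegral ℤ (((γ₀.a⁻¹⁻¹ : Kˣ) : K))
        rw [inv_inv]; exact h2
      · exact isIntegral_zero
    -- build the bijection
    let F : O ⧸ I → ↥(leftCosetsIn K g) := fun q =>
      Quotient.liftOn' q (fun b => (⟨Cb b, hmem b⟩ : ↥(leftCosetsIn K g)))
        (fun b b' hbb' => by
          apply Subtype.ext
          exact (hkey b b').mpr (Quotient.sound' hbb'))
    have hFbij : Function.Bijective F := by
      constructor
      · intro q q'
        induction q using Quotient.inductionOn'
        induction q' using Quotient.inductionOn'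
        rename_i b b'
        intro h
        have h' : Cb b = Cb b' := congrArg Subtype.val h
        exact (hkey b b').mp h'
      · rintro ⟨C, hC⟩
        obtain ⟨b, hb⟩ := hsurj C hC
        exact ⟨Ideal.Quotient.mk I b, Subtype.ext hb.symm⟩
    exact Nat.card_congr (Equiv.ofBijective F hFbij).symm
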